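/- Let u be a w-bubble such that u_j > 0 for every j ∈ {1, …, n}. Then for every i ∈ {1, …, n} such that Σ_{j ≠ i} w_j < d_w + w_i, one has u_i ≤ ⌊(max(π_i(w)) + c_{w,i}) / w_i⌋ − 2. -/

import Mathlib

/-- The weighted dot product `w · u = ∑ i, w i * u i`. -/
def dotW {n : ℕ} (w u : Fin n → ℕ) : ℕ := ∑ i, w i * u i

/-- `d_w`, the least common multiple of the weights. -/
def lcmW {n : ℕ} (w : Fin n → ℕ) : ℕ := Finset.univ.lcm w

/-- `u` is a `w`-bubble: `w · u ≥ 2 d_w` and there is no `v ⪯ u` with `w · v = d_w`. -/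
def IsBubble {n : ℕ} (w u : Fin n → ℕ) : Prop :=
  2 * lcmW w ≤ dotW w u ∧
    ¬ ∃ v : Fin n → ℕ, (∀ i, v i ≤ u i) ∧ dotW w v = lcmW w

open scoped Classical

/-- `B_{w,i,r}`: the set of values `w · b` for `b ∈ {0,1}^n` with `b_i = 0` and
`w · b ≡ r (mod w_i)`; such `b` correspond to finsets `S` with `i ∉ S`. -/
def BsetW {n : ℕ} (w : Fin n → ℕ) (i : Fin n) (r : ℕ) : Set ℕ :=
  { m | ∃ S : Finset (Fin n), i ∉ S ∧ (∑ j ∈ S, w j) = m ∧ m % w i = r }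

/-- `b_{w,i,r}`: the minimum of `B_{w,i,r}` if nonempty, and `(w_i − 1)·max(π_i(w))`
otherwise. -/
noncomputable def bvalW {n : ℕ} (w : Fin n → ℕ) (i : Fin n) (r : ℕ) : ℕ :=
  if (BsetW w i r).Nonempty then sInf (BsetW w i r)
  else (w i - 1) * (Finset.univ.erase i).sup w

/-- `c_{w,i} = max { b_{w,i,r} : 0 ≤ r ≤ w_i − 1 }`. -/
noncomputable def cvalW {n : ℕ} (w : Fin n → ℕ) (i : Fin n) : ℕ :=
  (Finset.range (w i)).sup (bvalW w i)

/-! ### Auxiliary lemmas -/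

lemma dotW_split {n : ℕ} (w y : Fin n → ℕ) (j : Fin n) :
    dotW w y = w j * y j + ∑ k ∈ Finset.univ.erase j, w k * y k := by
  unfold dotW
  rw [← Finset.add_sum_erase _ _ (Finset.mem_univ j)]

lemma dotW_update {n : ℕ} (w y : Fin n → ℕ) (j : Fin n) (v : ℕ) :
    dotW w (Function.update y j v) = w j * v + ∑ k ∈ Finset.univ.erase j, w k * y k := by
  rw [dotW_split w _ j, Function.update_self]
  congr 1
  refine Finset.sum_congr rfl (fun k hk => ?_)
  rw [Function.update_of_ne (Finset.mem_erase.mp hk).1]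

lemma dotW_update_sub_one {n : ℕ} (w y : Fin n → ℕ) (j : Fin n) (hyj : 0 < y j) :
    dotW w (Function.update y j (y j - 1)) + w j = dotW w y := by
  rw [dotW_update, dotW_split w y j]
  have : w j * (y j - 1) + w j = w j * y j := by
    rcases Nat.exists_eq_add_of_lt hyj with ⟨m, hm⟩
    rw [hm]
    simp [Nat.mul_succ]
  omega

lemma greedy_aux {n : ℕ} (w : Fin n → ℕ) (M : ℕ) (hM : 0 < M) :
    ∀ N (y : Fin n → ℕ), dotW w y ≤ N → (∀ j, 0 < y j → w j ≤ M) →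
    ∀ T, T ≤ dotW w y →
    ∃ x : Fin n → ℕ, (∀ j, x j ≤ y j) ∧ dotW w x ≤ T ∧ T < dotW w x + M := by
  intro N
  induction N with
  | zero =>
    intro y h0 _ T hT
    exact ⟨y, fun j => le_refl _, by omega, by omega⟩
  | succ N ih =>
    intro y hN hy T hT
    by_cases hc : dotW w y ≤ T
    · exact ⟨y, fun j => le_refl _, hc, by omega⟩
    · push_neg at hc
      obtain ⟨j, hj⟩ : ∃ j, 0 < w j * y j := by
        by_contra h; push_neg at h
        have : dotW w y = 0 := Finset.sum_eq_zero (fun j _ => by have := h j; omega)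
        omega
      have hyj : 0 < y j := Nat.pos_of_mul_pos_left (by rwa [mul_comm] at hj)
      have hwj : 0 < w j := by
        rcases Nat.eq_zero_or_pos (w j) with h | h
        · simp [h] at hj
        · exact h
      set y' := Function.update y j (y j - 1) with hy'def
      have hdot : dotW w y' + w j = dotW w y := dotW_update_sub_one w y j hyj
      have hle : ∀ k, y' k ≤ y k := by
        intro k; by_cases hk : k = j
        · subst hk; simp [hy'def]
        · simp [hy'def, Function.update_of_ne hk]
      have hy'M : ∀ k, 0 < y' k → w k ≤ M := fun k hk => hy k (lt_of_lt_of_le hk (hle k))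
      by_cases hc2 : dotW w y' < T
      · refine ⟨y', hle, le_of_lt hc2, ?_⟩
        have : w j ≤ M := hy j hyj
        omega
      · push_neg at hc2
        obtain ⟨x, hx1, hx2, hx3⟩ := ih y' (by omega) hy'M T hc2
        exact ⟨x, fun k => le_trans (hx1 k) (hle k), hx2, hx3⟩

lemma block_of_lt (q : ℕ) (L : List ℕ) (t1 t2 : ℕ) (h12 : t1 < t2) (ht2 : t2 ≤ L.length)
    (heq : (L.take t1).sum % q = (L.take t2).sum % q) :
    ∃ z : Multiset ℕ, z ≤ (L : Multiset ℕ) ∧ z ≠ 0 ∧ Multiset.card z ≤ t2 - t1 ∧ q ∣ z.sum := by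
  set B := (L.take t2).drop t1 with hB
  have hsub : B.Sublist L := ((L.take t2).drop_sublist t1).trans (L.take_sublist t2)
  have hsum : (L.take t1).sum + B.sum = (L.take t2).sum := by
    have h1 := List.sum_take_add_sum_drop (L.take t2) t1
    rwa [List.take_take, min_eq_left (le_of_lt h12)] at h1
  have hlenB : B.length = t2 - t1 := by
    rw [hB, List.length_drop, List.length_take, min_eq_left ht2]
  refine ⟨(B : Multiset ℕ), ?_, ?_, ?_, ?_⟩
  · exact Multiset.coe_le.mpr hsub.subperm
  · intro h
    have : B.length = 0 := by
      have := congrArg Multiset.card h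
      simpa using this
    omega
  · simpa [hlenB] using le_refl _
  · have hmod : (L.take t1).sum ≡ (L.take t2).sum [MOD q] := heq
    have := (Nat.modEq_iff_dvd' (by omega : (L.take t1).sum ≤ (L.take t2).sum)).mp hmod
    have heq2 : (L.take t2).sum - (L.take t1).sum = B.sum := by omega
    rwa [heq2] at this

lemma exists_zero_block (q : ℕ) (hq : 0 < q) (s : Multiset ℕ) (hcard : q ≤ Multiset.card s) :
    ∃ z : Multiset ℕ, z ≤ s ∧ z ≠ 0 ∧ Multiset.card z ≤ q ∧ q ∣ z.sum := by
  set L := s.toList with hL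
  have hLs : (L : Multiset ℕ) = s := by rw [hL, Multiset.coe_toList]
  have hlen : q ≤ L.length := by rw [hL, Multiset.length_toList]; exact hcard
  have hnotinj : ¬ Function.Injective
      (fun t : Fin (q+1) => (⟨(L.take t).sum % q, Nat.mod_lt _ hq⟩ : Fin q)) := by
    intro hinj
    have := Fintype.card_le_of_injective _ hinj
    simp at this
  rw [Function.not_injective_iff] at hnotinj
  obtain ⟨a, b, heq, hne⟩ := hnotinj
  have heq' : (L.take (a : ℕ)).sum % q = (L.take (b : ℕ)).sum % q := by
    simpa using congrArg Fin.val heq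
  have hha : (a : ℕ) ≤ q := by omega
  have hhb : (b : ℕ) ≤ q := by omega
  rcases lt_or_gt_of_ne (fun h => hne (Fin.ext h)) with hab | hab
  · obtain ⟨z, h1, h2, h3, h4⟩ := block_of_lt q L a b hab (le_trans hhb hlen) heq'
    exact ⟨z, by rwa [hLs] at h1, h2, by omega, h4⟩
  · obtain ⟨z, h1, h2, h3, h4⟩ := block_of_lt q L b a hab (le_trans hha hlen) heq'.symm
    exact ⟨z, by rwa [hLs] at h1, h2, by omega, h4⟩

lemma key_lemma (q M : ℕ) (hq : 0 < q) :
    ∀ N (s : Multiset ℕ), Multiset.card s ≤ N → (∀ a ∈ s, 0 < a ∧ a ≤ M) →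
    ∀ D E : ℕ, q ∣ D → q ∣ E → D + q * M ≤ E + q → D + (q - 1) * M ≤ s.sum →
    ∃ t : Multiset ℕ, t ≤ s ∧ q ∣ t.sum ∧ D ≤ t.sum ∧ t.sum ≤ E := by
  intro N
  induction N with
  | zero =>
    intro s hcard ha D E hD hE hwin hS
    have hs0 : s = 0 := by
      rw [← Multiset.card_eq_zero]; omega
    subst hs0
    simp at hS
    have hD0 : D = 0 := by omega
    exact ⟨0, le_refl _, by simp, by simp [hD0], by simp⟩
  | succ N ih =>
    intro s hcard ha D E hD hE hwin hS
    by_cases hD0 : D = 0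
    · exact ⟨0, Multiset.zero_le s, by simp, by simp [hD0], by simp⟩
    · have hDq : q ≤ D := Nat.le_of_dvd (by omega) hD
      have hM : 0 < M := by
        rcases Nat.eq_zero_or_pos M with h | h
        · subst h
          have hs0 : s = 0 := by
            rcases Multiset.empty_or_exists_mem s with h0 | ⟨a, hmem⟩
            · exact h0
            · have := ha a hmem; omega
          subst hs0; simp at hS; omega
        · exact h
      have hqM : q ≤ q * M := Nat.le_mul_of_pos_right q hM
      have hcards : q ≤ Multiset.card s := by
        by_contra h
        push_neg at h
        have hsum : s.sum ≤ Multiset.card s * M := by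
          have := Multiset.sum_le_card_nsmul s M (fun x hx => (ha x hx).2)
          simpa [smul_eq_mul] using this
        have : Multiset.card s * M ≤ (q - 1) * M := Nat.mul_le_mul_right M (by omega)
        omega
      obtain ⟨z, hzle, hz0, hzcard, hzdvd⟩ := exists_zero_block q hq s hcards
      have hzpos : 0 < z.sum := by
        obtain ⟨a, haz⟩ := Multiset.exists_mem_of_ne_zero hz0
        have ha1 := (ha a (Multiset.mem_of_le hzle haz)).1
        exact lt_of_lt_of_le ha1 (Multiset.single_le_sum (fun x _ => Nat.zero_le x) a haz)
      have hzM : z.sum ≤ q * M := by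
        have h1 : z.sum ≤ Multiset.card z * M := by
          have := Multiset.sum_le_card_nsmul z M (fun x hx => (ha x (Multiset.mem_of_le hzle hx)).2)
          simpa [smul_eq_mul] using this
        exact le_trans h1 (Nat.mul_le_mul_right M hzcard)
      by_cases hcmp : D ≤ z.sum
      · exact ⟨z, hzle, hzdvd, hcmp, by omega⟩
      · push_neg at hcmp
        have hzcard1 : 1 ≤ Multiset.card z := by
          rcases Nat.eq_zero_or_pos (Multiset.card z) with h | h
          · exact absurd (Multiset.card_eq_zero.mp h) hz0
          · exact h
        have hsumeq : (s - z).sum + z.sum = s.sum := by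
          have : (s - z) + z = s := tsub_add_cancel_of_le hzle
          rw [← Multiset.sum_add, this]
        have hcardeq : Multiset.card (s - z) + Multiset.card z = Multiset.card s := by
          have : (s - z) + z = s := tsub_add_cancel_of_le hzle
          rw [← Multiset.card_add, this]
        obtain ⟨t, ht1, ht2, ht3, ht4⟩ := ih (s - z) (by omega)
          (fun a hmem => ha a (Multiset.mem_of_le (Multiset.sub_le_self s z) hmem))
          (D - z.sum) (E - z.sum) (Nat.dvd_sub hD hzdvd) (Nat.dvd_sub hE hzdvd)
          (by omega) (by omega)
        refine ⟨t + z, ?_, ?_, ?_, ?_⟩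
        · have := add_le_add_left ht1 z
          rwa [tsub_add_cancel_of_le hzle] at this
        · rw [Multiset.sum_add]; exact Nat.dvd_add ht2 hzdvd
        · rw [Multiset.sum_add]; omega
        · rw [Multiset.sum_add]; omega

lemma multiset_split {ι : Type*} [DecidableEq ι] (f : ι → Multiset ℕ) (s : Finset ι)
    (t : Multiset ℕ) (ht : t ≤ ∑ j ∈ s, f j) :
    ∃ g : ι → Multiset ℕ, (∀ j, g j ≤ f j) ∧ t = ∑ j ∈ s, g j := by
  induction s using Finset.induction_on generalizing t with
  | empty =>
    simp only [Finset.sum_empty, Multiset.le_zero] at ht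
    exact ⟨fun _ => 0, fun j => Multiset.zero_le _, by simp [ht]⟩
  | @insert a s' hna ih =>
    rw [Finset.sum_insert hna] at ht
    have h1 : t - (∑ j ∈ s', f j) ≤ f a := tsub_le_iff_right.mpr ht
    obtain ⟨g, hg1, hg2⟩ := ih (t ∩ ∑ j ∈ s', f j) Multiset.inter_le_right
    refine ⟨Function.update g a (t - ∑ j ∈ s', f j), ?_, ?_⟩
    · intro j
      by_cases hj : j = a
      · subst hj; simpa using h1
      · simpa [Function.update_of_ne hj] using hg1 j
    · rw [Finset.sum_insert hna, Function.update_self]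
      have hcong : ∑ j ∈ s', Function.update g a (t - ∑ j ∈ s', f j) j = ∑ j ∈ s', g j := by
        refine Finset.sum_congr rfl (fun j hj => ?_)
        exact Function.update_of_ne (by rintro rfl; exact hna hj) _ _
      rw [hcong, ← hg2, Multiset.sub_add_inter]

lemma msum_msum {ι : Type*} (s : Finset ι) (f : ι → Multiset ℕ) :
    (∑ j ∈ s, f j).sum = ∑ j ∈ s, (f j).sum := by
  induction s using Finset.cons_induction with
  | empty => simp
  | cons a s' ha ih => rw [Finset.sum_cons, Finset.sum_cons, Multiset.sum_add, ih]

theorem bubble_pos_coord_bound {n : ℕ} (hn : 0 < n) (w : Fin n → ℕ) (hw : ∀ i, 0 < w i)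
    (u : Fin n → ℕ) (hu : IsBubble w u) (hpos : ∀ j, 0 < u j)
    (i : Fin n) (hi : ∑ j ∈ Finset.univ.erase i, w j < lcmW w + w i) :
    (u i : ℤ) ≤ (((((Finset.univ.erase i).sup w + cvalW w i) / w i : ℕ)) : ℤ) - 2 := by
  by_contra hcon
  push_neg at hcon
  obtain ⟨hub, hnov⟩ := hu
  have hdvd : ∀ j, w j ∣ lcmW w := fun j => Finset.dvd_lcm (Finset.mem_univ j)
  set d := lcmW w with hd
  set M := (Finset.univ.erase i).sup w with hM
  set c := cvalW w i with hc
  set s0 := ∑ j ∈ Finset.univ.erase i, w j with hs0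
  -- the negated conclusion gives (4): M + c + 1 ≤ w i * u i + 2 * w i
  have h4 : M + c + 1 ≤ w i * u i + 2 * w i := by
    have h1 : ((M + c) / w i : ℕ) ≤ u i + 1 := by
      by_contra h
      push_neg at h
      have h2 : (u i : ℤ) ≤ (((M + c) / w i : ℕ) : ℤ) - 2 := by
        have : (u i : ℤ) + 2 ≤ (((M + c) / w i : ℕ) : ℤ) := by exact_mod_cast h
        omega
      exact absurd h2 (not_le.mpr hcon)
    have h2 : (M + c) / w i < u i + 2 := by omega
    have h3 := (Nat.div_lt_iff_lt_mul (hw i)).mp h2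
    have he : (u i + 2) * w i = w i * u i + 2 * w i := by ring
    omega
  -- Step 1 : if d ≤ w i * u i we can represent d on coordinate i alone
  by_cases hstep1 : d ≤ w i * u i
  · refine absurd ⟨fun j => if j = i then d / w i else 0, ?_, ?_⟩ hnov
    · intro j
      by_cases hj : j = i
      · show (if j = i then d / w i else 0) ≤ u j
        rw [if_pos hj, hj]
        have h5 : d / w i ≤ w i * u i / w i := Nat.div_le_div_right hstep1
        rwa [Nat.mul_div_cancel_left _ (hw i)] at h5
      · simp [hj]
    · rw [dotW_split w _ i]
      have h6 : ∀ j ∈ Finset.univ.erase i, w j * (if j = i then d / w i else 0) = 0 := by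
        intro j hj
        simp [(Finset.mem_erase.mp hj).1]
      rw [Finset.sum_eq_zero h6]
      simp [Nat.mul_div_cancel' (hdvd i)]
  push_neg at hstep1
  have hstep1' : w i * u i + w i ≤ d := by
    obtain ⟨a, haa⟩ := hdvd i
    have h7 : u i < a := by
      have : w i * u i < w i * a := by omega
      exact Nat.lt_of_mul_lt_mul_left this
    have h8 : w i * (u i + 1) ≤ w i * a := Nat.mul_le_mul_left _ h7
    have h9 : w i * (u i + 1) = w i * u i + w i := by ring
    omega
  set tot := ∑ j ∈ Finset.univ.erase i, w j * u j with htot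
  have hsplit : dotW w u = w i * u i + tot := dotW_split w u i
  have htot1 : d + w i ≤ tot := by omega
  by_cases hbr : (w i - 1) * M ≤ c
  · -- Branch X : c is at least (w i - 1) * M
    have he1 : M + (w i - 1) * M = w i * M := by
      rcases Nat.exists_eq_add_of_lt (hw i) with ⟨k, hk⟩
      rw [hk]
      simp [Nat.succ_mul, Nat.add_mul]
      ring
    have hMui : M ≤ u i + 1 := by
      have he2 : w i * (u i + 2) = w i * u i + 2 * w i := by ring
      have h10 : w i * M < w i * (u i + 2) := by omega
      have := Nat.lt_of_mul_lt_mul_left h10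
      omega
    set ms : Multiset ℕ := ∑ j ∈ Finset.univ.erase i, Multiset.replicate (u j) (w j) with hms
    have hms_sum : ms.sum = tot := by
      rw [hms, msum_msum]
      refine Finset.sum_congr rfl (fun j hj => ?_)
      rw [Multiset.sum_replicate, smul_eq_mul, mul_comm]
    have hms_mem : ∀ a ∈ ms, 0 < a ∧ a ≤ M := by
      intro a ha2
      rw [hms, Multiset.mem_sum] at ha2
      obtain ⟨j, hj, hja⟩ := ha2
      have he : a = w j := Multiset.eq_of_mem_replicate hja
      subst he
      exact ⟨hw j, Finset.le_sup hj⟩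
    have hDdvd : w i ∣ d - w i * u i := Nat.dvd_sub (hdvd i) (dvd_mul_right _ _)
    have h11 : w i * (u i + 1) = w i * u i + w i := by ring
    have h10 : w i * M ≤ w i * (u i + 1) := Nat.mul_le_mul_left _ hMui
    have hwin : (d - w i * u i) + w i * M ≤ d + w i := by omega
    have hSk : (d - w i * u i) + (w i - 1) * M ≤ ms.sum := by
      have h9 : (w i - 1) * M ≤ w i * M := Nat.mul_le_mul_right M (by omega)
      rw [hms_sum]
      omega
    obtain ⟨t, htle, htdvd, htD, htE⟩ := key_lemma (w i) M (hw i) (Multiset.card ms) ms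
      (le_refl _) hms_mem (d - w i * u i) d hDdvd (hdvd i) hwin hSk
    obtain ⟨g, hg1, hg2⟩ := multiset_split (fun j => Multiset.replicate (u j) (w j))
      (Finset.univ.erase i) t htle
    set x : Fin n → ℕ := fun j => if j = i then 0 else Multiset.card (g j) with hx
    have hgcard : ∀ j, Multiset.card (g j) ≤ u j := by
      intro j
      have := Multiset.card_le_card (hg1 j)
      simpa using this
    have hgsum : ∀ j, (g j).sum = Multiset.card (g j) * w j := by
      intro j
      have he : g j = Multiset.replicate (Multiset.card (g j)) (w j) :=
        Multiset.eq_replicate_card.mpr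
          (fun b hb => Multiset.eq_of_mem_replicate (Multiset.mem_of_le (hg1 j) hb))
      conv_lhs => rw [he]
      rw [Multiset.sum_replicate, smul_eq_mul]
    have hdotx : dotW w x = t.sum := by
      rw [dotW_split w x i, hg2, msum_msum]
      have hxi : x i = 0 := by simp [hx]
      rw [hxi, mul_zero, zero_add]
      refine Finset.sum_congr rfl (fun j hj => ?_)
      have hji : j ≠ i := (Finset.mem_erase.mp hj).1
      rw [hgsum j]
      simp [hx, hji, mul_comm]
    obtain ⟨k, hk⟩ := Nat.dvd_sub (hdvd i) htdvd
    have hkd : t.sum + w i * k = d := by omega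
    have hkui : k ≤ u i := by
      have h12 : w i * k ≤ w i * u i := by omega
      exact Nat.le_of_mul_le_mul_left h12 (hw i)
    refine absurd ⟨fun j => x j + (if j = i then k else 0), ?_, ?_⟩ hnov
    · intro j
      by_cases hj : j = i
      · subst hj; simp [hx]; exact hkui
      · simp [hx, hj]; exact hgcard j
    · have hdot2 : dotW w (fun j => x j + (if j = i then k else 0))
          = dotW w x + w i * k := by
        unfold dotW
        simp only [mul_add, Finset.sum_add_distrib, mul_ite, mul_zero]
        rw [Finset.sum_ite_eq' Finset.univ i (fun j => w j * k)]
        simp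
      rw [hdot2, hdotx]
      omega
  · -- Branch Y : c < (w i - 1) * M
    push_neg at hbr
    have hcs : c ≤ s0 := by
      obtain ⟨r0, hr0mem, hr0⟩ := Finset.exists_mem_eq_sup (Finset.range (w i))
        (Finset.nonempty_range_iff.mpr (Nat.pos_iff_ne_zero.mp (hw i))) (bvalW w i)
      have hcr0 : c = bvalW w i r0 := by rw [hc, cvalW, hr0]
      by_cases hne : (BsetW w i r0).Nonempty
      · have hmem := Nat.sInf_mem hne
        obtain ⟨S, hiS, hSsum, hSmod⟩ := hmem
        have hSle : ∑ j ∈ S, w j ≤ s0 := by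
          rw [hs0]
          refine Finset.sum_le_sum_of_subset (fun j hj => Finset.mem_erase.mpr ⟨?_, Finset.mem_univ j⟩)
          rintro rfl; exact hiS hj
        have hceq : c = sInf (BsetW w i r0) := by rw [hcr0]; unfold bvalW; rw [if_pos hne]
        omega
      · exfalso
        have h13 : c = (w i - 1) * M := by
          rw [hcr0]; unfold bvalW; rw [if_neg hne, ← hM]
        omega
    set tot' := ∑ j ∈ Finset.univ.erase i, w j * (u j - 1) with htot'
    have htot's : tot' + s0 = tot := by
      rw [htot', hs0, htot, ← Finset.sum_add_distrib]
      refine Finset.sum_congr rfl (fun j hj => ?_)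
      rcases Nat.exists_eq_add_of_lt (hpos j) with ⟨m2, hm2⟩
      rw [hm2]
      simp [Nat.mul_succ]
    set yb : Fin n → ℕ := fun j => if j = i then 0 else u j - 1 with hyb
    have hyb_dot : dotW w yb = tot' := by
      rw [dotW_split w yb i]
      have hybi : yb i = 0 := by simp [hyb]
      rw [hybi, mul_zero, zero_add, htot']
      refine Finset.sum_congr rfl (fun j hj => ?_)
      simp [hyb, (Finset.mem_erase.mp hj).1]
    have hMpos : 0 < M := by
      have htot'1 : 1 ≤ tot' := by omega
      have hex : ∃ j ∈ Finset.univ.erase i, w j * (u j - 1) ≠ 0 := by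
        by_contra hno
        push_neg at hno
        have : tot' = 0 := by rw [htot']; exact Finset.sum_eq_zero (fun j hj => hno j hj)
        omega
      obtain ⟨j, hj, hjne⟩ := hex
      exact lt_of_lt_of_le (hw j) (Finset.le_sup hj)
    have hyM : ∀ j, 0 < yb j → w j ≤ M := by
      intro j hj
      have hji : j ≠ i := by
        intro h; rw [hyb] at hj; simp [h] at hj
      exact Finset.le_sup (Finset.mem_erase.mpr ⟨hji, Finset.mem_univ j⟩)
    obtain ⟨x, hxle, hσ1, hσ2⟩ :
        ∃ x : Fin n → ℕ, (∀ j, x j ≤ yb j) ∧ dotW w x ≤ d + w i - 1 - c ∧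
          (dotW w x = tot' ∨ d + w i - 1 - c < dotW w x + M) := by
      by_cases hcase : tot' ≤ d + w i - 1 - c
      · exact ⟨yb, fun j => le_refl _, by omega, Or.inl hyb_dot⟩
      · push_neg at hcase
        obtain ⟨x, h1, h2, h3⟩ := greedy_aux w M hMpos (dotW w yb) yb (le_refl _)
          hyM (d + w i - 1 - c) (by omega)
        exact ⟨x, h1, h2, Or.inr h3⟩
    set σ := dotW w x with hσ
    set r := (w i - σ % w i) % w i with hr
    have hrlt : r < w i := Nat.mod_lt _ (hw i)
    have hbv : bvalW w i r ≤ c := by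
      rw [hc, cvalW]
      exact Finset.le_sup (Finset.mem_range.mpr hrlt)
    have hBne : (BsetW w i r).Nonempty := by
      by_contra hBe
      have h13 : bvalW w i r = (w i - 1) * M := by
        unfold bvalW; rw [if_neg hBe, ← hM]
      omega
    set m := sInf (BsetW w i r) with hm
    obtain ⟨S, hiS, hSsum, hSmod⟩ := Nat.sInf_mem hBne
    have hmc : m ≤ c := by
      unfold bvalW at hbv
      rw [if_pos hBne] at hbv
      omega
    have hdvdσm : w i ∣ σ + m := by
      have h15 : (σ % w i + m % w i) % w i = 0 := by
        rw [hSmod]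
        rcases Nat.eq_zero_or_pos (σ % w i) with h | h
        · rw [h, hr, h]
          simp
        · have hlt : σ % w i < w i := Nat.mod_lt _ (hw i)
          have hre : r = w i - σ % w i := by rw [hr, Nat.mod_eq_of_lt (by omega)]
          rw [hre]
          have h16 : σ % w i + (w i - σ % w i) = w i := by omega
          rw [h16, Nat.mod_self]
      have h17 := Nat.add_mod σ m (w i)
      exact Nat.dvd_of_mod_eq_zero (by omega)
    have hσm_le : σ + m ≤ d + w i - 1 := by omega
    have hσmd : σ + m ≤ d := by
      obtain ⟨a, haa⟩ := hdvdσm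
      obtain ⟨b, hbb⟩ := hdvd i
      have h17 : w i * (b + 1) = w i * b + w i := by ring
      have h18 : w i * a < w i * (b + 1) := by omega
      have h19 : a < b + 1 := Nat.lt_of_mul_lt_mul_left h18
      have h20 : w i * a ≤ w i * b := Nat.mul_le_mul_left _ (by omega)
      omega
    obtain ⟨k, hk⟩ := Nat.dvd_sub (hdvd i) hdvdσm
    have hkd : σ + m + w i * k = d := by omega
    have hkui : k ≤ u i := by
      have he2 : w i * (u i + 1) = w i * u i + w i := by ring
      have h21 : w i * k < w i * (u i + 1) := by
        rcases hσ2 with hB | hA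
        · omega
        · omega
      have := Nat.lt_of_mul_lt_mul_left h21
      omega
    refine absurd ⟨fun j => x j + (if j ∈ S then 1 else 0) + (if j = i then k else 0), ?_, ?_⟩ hnov
    · intro j
      by_cases hj : j = i
      · subst hj
        have hx0 : x j ≤ 0 := by simpa [hyb] using hxle j
        simp [hiS, hx0]
        omega
      · have hx1 : x j ≤ u j - 1 := by simpa [hyb, hj] using hxle j
        have hupos := hpos j
        have hite : (if j ∈ S then 1 else 0) ≤ 1 := by split <;> omega
        simp only [if_neg hj, add_zero]
        omega
    · have hdot2 : dotW w (fun j => x j + (if j ∈ S then 1 else 0) + (if j = i then k else 0))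
          = dotW w x + (∑ j ∈ S, w j) + w i * k := by
        unfold dotW
        simp only [mul_add, Finset.sum_add_distrib, mul_ite, mul_zero, mul_one]
        have e1 : (∑ j2 : Fin n, if j2 ∈ S then w j2 else 0) = ∑ j2 ∈ S, w j2 := by
          rw [Finset.sum_ite_mem, Finset.univ_inter]
        have e2 : (∑ j2 : Fin n, if j2 = i then w j2 * k else 0) = w i * k := by
          rw [Finset.sum_ite_eq' Finset.univ i (fun j2 => w j2 * k)]
          simp
        rw [e1, e2]
      rw [hdot2, hSsum]
      omega
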